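/- (Main Proposition: dual certificate implies exact recovery) Let X_r = Σ_{ℓ=1}^L α_ℓ u w(r_ℓ)^H with α_ℓ ∈ ℂ \ {0}, r_ℓ ∈ [0,1]^3 pairwise distinct, u ∈ ℂ^K with ‖u‖₂ = 1, let X_c = Σ_{q=1}^Q α'_q v w(c_q)^H with α'_q ∈ ℂ \ {0}, c_q ∈ [0,1]^3 pairwise distinct, v ∈ ℂ^{K'} with ‖v‖₂ = 1, and let y = B_r(X_r) + B_c(X_c). Write R = {r_1,…,r_L} and C = {c_1,…,c_Q}. Suppose there exists q ∈ ℂ^D such that the dual polynomials f_r(r) = B_r*(q) w(r) and f_c(c) = B_c*(q) w(c) satisfy: f_r(r_ℓ) = sign(α_ℓ)·u for all r_ℓ ∈ R; f_c(c_q) = sign(α'_q)·v for all c_q ∈ C; ‖f_r(r)‖₂ < 1 for all r ∈ [0,1]^3 \ R; and ‖f_c(c)‖₂ < 1 for all c ∈ [0,1]^3 \ C. Then (X_r, X_c) is an optimal solution of the atomic norm minimization problem: for every pair (Z_r, Z_c) of matrices admitting atomic decompositions with B_r(Z_r) + B_c(Z_c) = y, one has ‖X_r‖_{A_r} + ‖X_c‖_{A_c}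 ≤ ‖Z_r‖_{A_r} + ‖Z_c‖_{A_c}. -/

import Mathlib

open scoped BigOperators
open Matrix

noncomputable section

/-- Index set of size `D = Nr * M * P` with `M = 2N+1`, ordered as `p ⊗ d ⊗ b`. -/
abbrev Dix (Nr P N : ℕ) := Fin P × Fin (2 * N + 1) × Fin Nr

/-- Spatial steering vector `b(β) ∈ ℂ^{Nr}`, `b(β)[k] = exp(-2πi k β)`. -/
def bVec (Nr : ℕ) (β : ℝ) : Fin Nr → ℂ :=
  fun k => Complex.exp (-(2 * Real.pi * Complex.I * ((k : ℕ) : ℂ) * (β : ℂ)))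

/-- Delay steering vector `d(τ) ∈ ℂ^{M}`, `M = 2N+1`, entries `exp(-2πi n τ)`, `n = -N,…,N`. -/
def dVec (N : ℕ) (τ : ℝ) : Fin (2 * N + 1) → ℂ :=
  fun n => Complex.exp (-(2 * Real.pi * Complex.I * ((((n : ℕ) : ℤ) - (N : ℤ) : ℤ) : ℂ) * (τ : ℂ)))

/-- Doppler steering vector `p(ν) ∈ ℂ^{P}`, `p(ν)[p] = exp(-2πi p ν)`. -/
def pVec (P : ℕ) (ν : ℝ) : Fin P → ℂ :=
  fun p => Complex.exp (-(2 * Real.pi * Complex.I * ((p : ℕ) : ℂ) * (ν : ℂ)))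

/-- `w(r) = p(ν) ⊗ d(τ) ⊗ b(β) ∈ ℂ^D`, for `r = (τ, ν, β)`. -/
def wVec (Nr P N : ℕ) (r : ℝ × ℝ × ℝ) : Dix Nr P N → ℂ :=
  fun j => pVec P r.2.1 j.1 * dVec N r.1 j.2.1 * bVec Nr r.2.2 j.2.2

/-- The parameter cube `[0,1]^3`. -/
def cube : Set (ℝ × ℝ × ℝ) := Set.Icc ((0, 0, 0) : ℝ × ℝ × ℝ) (1, 1, 1)

/-- Euclidean (ℓ₂) norm of a complex vector. -/
def norm2 {ι : Type*} [Fintype ι] (u : ι → ℂ) : ℝ := Real.sqrt (∑ i, ‖u i‖ ^ 2)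

/-- Atom `u w^H ∈ ℂ^{K×D}`. -/
def atom {ι : Type*} (K : ℕ) (u : Fin K → ℂ) (w : ι → ℂ) : Matrix (Fin K) ι ℂ :=
  fun k j => u k * starRingEnd ℂ (w j)

/-- `sign(c) = c / |c|`. -/
def csign (c : ℂ) : ℂ := c / ((‖c‖ : ℝ) : ℂ)

/-- Atomic norm of `X ∈ ℂ^{K×D}` with respect to the atoms `u w(r)^H`. -/
def atomicNorm (Nr P N K : ℕ) (X : Matrix (Fin K) (Dix Nr P N) ℂ) : ℝ :=
  sInf { t | ∃ (L : ℕ) (α : Fin L → ℂ) (r : Fin L → ℝ × ℝ × ℝ) (u : Fin K → ℂ),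
    (∀ ℓ, r ℓ ∈ cube) ∧ norm2 u = 1 ∧
    X = ∑ ℓ, α ℓ • atom K u (wVec Nr P N (r ℓ)) ∧
    t = ∑ ℓ, ‖α ℓ‖ }

/-- Dual atomic norm `‖Y‖*_A = sup { |Tr(A^H Y)| : A an atom }`. -/
def dualAtomicNorm (Nr P N K : ℕ) (Y : Matrix (Fin K) (Dix Nr P N) ℂ) : ℝ :=
  sSup { t | ∃ (rr : ℝ × ℝ × ℝ) (u : Fin K → ℂ), rr ∈ cube ∧ norm2 u = 1 ∧
    t = ‖Matrix.trace ((atom K u (wVec Nr P N rr))ᴴ * Y)‖ }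

/-- `X` admits at least one atomic decomposition. -/
def hasAtomicDecomp (Nr P N K : ℕ) (X : Matrix (Fin K) (Dix Nr P N) ℂ) : Prop :=
  ∃ (L : ℕ) (α : Fin L → ℂ) (r : Fin L → ℝ × ℝ × ℝ) (u : Fin K → ℂ),
    (∀ ℓ, r ℓ ∈ cube) ∧ norm2 u = 1 ∧
    X = ∑ ℓ, α ℓ • atom K u (wVec Nr P N (r ℓ))

/-- The linear operator `B(X)[j] = Tr(G_j X)`. -/
def Bop {ι : Type*} [Fintype ι] {K : ℕ} (G : ι → Matrix ι (Fin K) ℂ)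
    (X : Matrix (Fin K) ι ℂ) : ι → ℂ := fun j => Matrix.trace (G j * X)

/-- The adjoint operator `B*(q) = Σ_j q[j] G_j^H`. -/
def Bstar {ι : Type*} [Fintype ι] {K : ℕ} (G : ι → Matrix ι (Fin K) ℂ)
    (q : ι → ℂ) : Matrix (Fin K) ι ℂ := ∑ j, q j • (G j)ᴴ

/-- Real inner product `⟨q, y⟩_ℝ = Re(y^H q)`. -/
def rInner {ι : Type*} [Fintype ι] (q y : ι → ℂ) : ℝ :=
  (∑ j, starRingEnd ℂ (y j) * q j).re

section Aux

variable {ι : Type*} [Fintype ι]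

lemma norm2_nonneg (u : ι → ℂ) : 0 ≤ norm2 u := Real.sqrt_nonneg _

lemma norm2_eq_enorm (u : ι → ℂ) :
    norm2 u = ‖(WithLp.equiv 2 (ι → ℂ)).symm u‖ := by
  rw [EuclideanSpace.norm_eq]; rfl

lemma norm2_smul (cc : ℂ) (u : ι → ℂ) :
    norm2 (cc • u) = ‖cc‖ * norm2 u := by
  have h : (WithLp.equiv 2 (ι → ℂ)).symm (cc • u)
      = cc • (WithLp.equiv 2 (ι → ℂ)).symm u := rfl
  rw [norm2_eq_enorm, h, norm_smul, norm2_eq_enorm]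

lemma abs_sum_conj_mul_le (u x : ι → ℂ) :
    ‖∑ k, (starRingEnd ℂ) (u k) * x k‖ ≤ norm2 u * norm2 x := by
  have h := norm_inner_le_norm (𝕜 := ℂ)
    ((WithLp.equiv 2 (ι → ℂ)).symm u) ((WithLp.equiv 2 (ι → ℂ)).symm x)
  rw [PiLp.inner_apply] at h
  simpa [RCLike.inner_apply, norm2_eq_enorm, mul_comm] using h

lemma trace_atomH_mul {K : ℕ} (u : Fin K → ℂ) (w : ι → ℂ) (M : Matrix (Fin K) ι ℂ) :
    Matrix.trace ((atom K u w)ᴴ * M) = ∑ k, (starRingEnd ℂ) (u k) * (M *ᵥ w) k := by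
  unfold Matrix.trace atom
  simp only [Matrix.diag_apply, Matrix.mul_apply, Matrix.conjTranspose_apply,
    Matrix.mulVec, dotProduct]
  rw [Finset.sum_comm]
  refine Finset.sum_congr rfl fun k _ => ?_
  rw [Finset.mul_sum]
  refine Finset.sum_congr rfl fun j _ => ?_
  show star (u k * (starRingEnd ℂ) (w j)) * M k j = _
  simp only [star_mul', Complex.star_def, Complex.conj_conj]
  ring

lemma trace_conjT_mul_Bstar {K : ℕ} (G : ι → Matrix ι (Fin K) ℂ) (q : ι → ℂ)
    (X : Matrix (Fin K) ι ℂ) :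
    Matrix.trace (Xᴴ * Bstar G q) = ∑ j, (starRingEnd ℂ) (Bop G X j) * q j := by
  unfold Bstar Bop
  rw [Matrix.mul_sum, Matrix.trace_sum]
  refine Finset.sum_congr rfl fun j _ => ?_
  rw [Matrix.mul_smul, Matrix.trace_smul, ← Matrix.conjTranspose_mul,
    Matrix.trace_conjTranspose]
  simp [smul_eq_mul, mul_comm]

lemma trace_sum_atoms {K L : ℕ} (α : Fin L → ℂ) (u : Fin K → ℂ) (wf : Fin L → ι → ℂ)
    (M : Matrix (Fin K) ι ℂ) :
    Matrix.trace ((∑ ℓ, α ℓ • atom K u (wf ℓ))ᴴ * M)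
      = ∑ ℓ, (starRingEnd ℂ) (α ℓ) * ∑ k, (starRingEnd ℂ) (u k) * (M *ᵥ wf ℓ) k := by
  rw [Matrix.conjTranspose_sum, Matrix.sum_mul, Matrix.trace_sum]
  refine Finset.sum_congr rfl fun ℓ _ => ?_
  rw [Matrix.conjTranspose_smul, Matrix.smul_mul, Matrix.trace_smul, trace_atomH_mul]
  simp [smul_eq_mul]

lemma abs_csign {a : ℂ} (ha : a ≠ 0) : ‖csign a‖ = 1 := by
  unfold csign
  rw [norm_div, Complex.norm_real, norm_norm]
  exact div_self (norm_ne_zero_iff.mpr ha)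

lemma conj_mul_csign {a : ℂ} (ha : a ≠ 0) :
    (starRingEnd ℂ) a * csign a = ((‖a‖ : ℝ) : ℂ) := by
  have h : ((‖a‖ : ℝ) : ℂ) ≠ 0 := by
    exact Complex.ofReal_ne_zero.mpr (norm_ne_zero_iff.mpr ha)
  unfold csign
  rw [mul_div_assoc', mul_comm, Complex.mul_conj, Complex.normSq_eq_norm_sq, sq]
  push_cast
  rw [mul_div_assoc, div_self h, mul_one]

lemma sum_norm_sq_eq_one {u : ι → ℂ} (hu : norm2 u = 1) :
    (∑ k, ‖u k‖ ^ 2 : ℝ) = 1 := by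
  have h0 : (0:ℝ) ≤ ∑ k, ‖u k‖ ^ 2 := Finset.sum_nonneg fun _ _ => sq_nonneg _
  have h1 : Real.sqrt (∑ k, ‖u k‖ ^ 2) = 1 := hu
  rw [← Real.sq_sqrt h0, h1, one_pow]

lemma sum_conj_mul_self {u : ι → ℂ} (hu : norm2 u = 1) :
    (∑ k, (starRingEnd ℂ) (u k) * u k) = 1 := by
  have h : ∀ k : ι, (starRingEnd ℂ) (u k) * u k = ((‖u k‖ ^ 2 : ℝ) : ℂ) := by
    intro k
    rw [mul_comm, Complex.mul_conj, Complex.normSq_eq_norm_sq]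
  rw [Finset.sum_congr rfl fun k _ => h k, ← Complex.ofReal_sum, sum_norm_sq_eq_one hu,
    Complex.ofReal_one]

end Aux

lemma atomicSet_bddBelow (Nr P N K : ℕ) (X : Matrix (Fin K) (Dix Nr P N) ℂ) :
    BddBelow { t | ∃ (L : ℕ) (α : Fin L → ℂ) (r : Fin L → ℝ × ℝ × ℝ) (u : Fin K → ℂ),
      (∀ ℓ, r ℓ ∈ cube) ∧ norm2 u = 1 ∧
      X = ∑ ℓ, α ℓ • atom K u (wVec Nr P N (r ℓ)) ∧
      t = ∑ ℓ, ‖α ℓ‖ } := by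
  refine ⟨0, ?_⟩
  rintro t ⟨L, α, r, u, -, -, -, rfl⟩
  exact Finset.sum_nonneg fun _ _ => norm_nonneg _

lemma atomicNorm_le_of_decomp (Nr P N K : ℕ) {L : ℕ} (α : Fin L → ℂ)
    (r : Fin L → ℝ × ℝ × ℝ) (u : Fin K → ℂ)
    (hcube : ∀ ℓ, r ℓ ∈ cube) (hu : norm2 u = 1)
    (X : Matrix (Fin K) (Dix Nr P N) ℂ)
    (hX : X = ∑ ℓ, α ℓ • atom K u (wVec Nr P N (r ℓ))) :
    atomicNorm Nr P N K X ≤ ∑ ℓ, ‖α ℓ‖ :=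
  csInf_le (atomicSet_bddBelow Nr P N K X) ⟨L, α, r, u, hcube, hu, hX, rfl⟩

lemma re_trace_le_atomicNorm (Nr P N K : ℕ) (M : Matrix (Fin K) (Dix Nr P N) ℂ)
    (hM : ∀ rr ∈ cube, norm2 (M *ᵥ wVec Nr P N rr) ≤ 1)
    (Z : Matrix (Fin K) (Dix Nr P N) ℂ) (hZ : hasAtomicDecomp Nr P N K Z) :
    (Matrix.trace (Zᴴ * M)).re ≤ atomicNorm Nr P N K Z := by
  obtain ⟨L0, α0, r0, u0, hc0, hn0, hZeq⟩ := hZ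
  refine le_csInf ⟨_, L0, α0, r0, u0, hc0, hn0, hZeq, rfl⟩ ?_
  rintro t ⟨L1, α1, r1, u1, hc1, hn1, hZeq1, rfl⟩
  calc (Matrix.trace (Zᴴ * M)).re
      ≤ ‖Matrix.trace (Zᴴ * M)‖ := Complex.re_le_norm _
    _ = ‖∑ ℓ, (starRingEnd ℂ) (α1 ℓ)
          * ∑ k, (starRingEnd ℂ) (u1 k) * (M *ᵥ wVec Nr P N (r1 ℓ)) k‖ := by
        rw [hZeq1, trace_sum_atoms]
    _ ≤ ∑ ℓ, ‖(starRingEnd ℂ) (α1 ℓ)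
          * ∑ k, (starRingEnd ℂ) (u1 k) * (M *ᵥ wVec Nr P N (r1 ℓ)) k‖ :=
        norm_sum_le _ _
    _ ≤ ∑ ℓ, ‖α1 ℓ‖ := by
        refine Finset.sum_le_sum fun ℓ _ => ?_
        rw [norm_mul, Complex.norm_conj]
        have h1 : ‖∑ k, (starRingEnd ℂ) (u1 k)
            * (M *ᵥ wVec Nr P N (r1 ℓ)) k‖ ≤ 1 := by
          calc _ ≤ norm2 u1 * norm2 (M *ᵥ wVec Nr P N (r1 ℓ)) := abs_sum_conj_mul_le _ _
            _ ≤ 1 * 1 := by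
                apply mul_le_mul (le_of_eq hn1) (hM _ (hc1 ℓ)) (norm2_nonneg _)
                norm_num
            _ = 1 := by norm_num
        calc _ ≤ ‖α1 ℓ‖ * 1 :=
              mul_le_mul_of_nonneg_left h1 (norm_nonneg _)
          _ = _ := mul_one _

lemma re_trace_eq_sum_abs (Nr P N K : ℕ) (M : Matrix (Fin K) (Dix Nr P N) ℂ)
    {L : ℕ} (α : Fin L → ℂ) (r : Fin L → ℝ × ℝ × ℝ) (u : Fin K → ℂ)
    (hα : ∀ ℓ, α ℓ ≠ 0) (hu : norm2 u = 1)
    (hcert : ∀ ℓ, M *ᵥ wVec Nr P N (r ℓ) = csign (α ℓ) • u)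
    (X : Matrix (Fin K) (Dix Nr P N) ℂ)
    (hX : X = ∑ ℓ, α ℓ • atom K u (wVec Nr P N (r ℓ))) :
    (Matrix.trace (Xᴴ * M)).re = ∑ ℓ, ‖α ℓ‖ := by
  have key : Matrix.trace (Xᴴ * M) = ((∑ ℓ, ‖α ℓ‖ : ℝ) : ℂ) := by
    rw [hX, trace_sum_atoms]
    push_cast
    refine Finset.sum_congr rfl fun ℓ _ => ?_
    rw [hcert ℓ]
    have h2 : (∑ k, (starRingEnd ℂ) (u k) * (csign (α ℓ) • u) k)
        = csign (α ℓ) := by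
      have : ∀ k, (starRingEnd ℂ) (u k) * (csign (α ℓ) • u) k
          = csign (α ℓ) * ((starRingEnd ℂ) (u k) * u k) := by
        intro k; simp [Pi.smul_apply, smul_eq_mul]; ring
      rw [Finset.sum_congr rfl fun k _ => this k, ← Finset.mul_sum,
        sum_conj_mul_self hu, mul_one]
    rw [h2, conj_mul_csign (hα ℓ)]
  rw [key, Complex.ofReal_re]

/-- **Main Proposition: dual certificate implies exact recovery.**
If there is `q` whose dual polynomials interpolate the sign patterns at the true
parameters and are strictly bounded by one elsewhere on `[0,1]^3`, then `(X_r, X_c)`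
is an optimal solution of the atomic norm minimization problem. -/
theorem dual_certificate_implies_recovery (Nr P N K K' : ℕ)
    (hNr : 0 < Nr) (hP : 0 < P) (hK : 0 < K) (hK' : 0 < K')
    (G : Dix Nr P N → Matrix (Dix Nr P N) (Fin K) ℂ)
    (A : Dix Nr P N → Matrix (Dix Nr P N) (Fin K') ℂ)
    (L : ℕ) (α : Fin L → ℂ) (r : Fin L → ℝ × ℝ × ℝ) (u : Fin K → ℂ)
    (hα : ∀ ℓ, α ℓ ≠ 0) (hr : ∀ ℓ, r ℓ ∈ cube) (hrdist : Function.Injective r)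
    (hu : norm2 u = 1)
    (Q : ℕ) (α' : Fin Q → ℂ) (c : Fin Q → ℝ × ℝ × ℝ) (v : Fin K' → ℂ)
    (hα' : ∀ qq, α' qq ≠ 0) (hc : ∀ qq, c qq ∈ cube) (hcdist : Function.Injective c)
    (hv : norm2 v = 1)
    (Xr : Matrix (Fin K) (Dix Nr P N) ℂ)
    (hXr : Xr = ∑ ℓ, α ℓ • atom K u (wVec Nr P N (r ℓ)))
    (Xc : Matrix (Fin K') (Dix Nr P N) ℂ)
    (hXc : Xc = ∑ qq, α' qq • atom K' v (wVec Nr P N (c qq)))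
    (y : Dix Nr P N → ℂ)
    (hy : y = fun j => Bop G Xr j + Bop A Xc j)
    (hcert : ∃ q : Dix Nr P N → ℂ,
      (∀ ℓ, Bstar G q *ᵥ wVec Nr P N (r ℓ) = csign (α ℓ) • u) ∧
      (∀ qq, Bstar A q *ᵥ wVec Nr P N (c qq) = csign (α' qq) • v) ∧
      (∀ rr ∈ cube, rr ∉ Set.range r → norm2 (Bstar G q *ᵥ wVec Nr P N rr) < 1) ∧
      (∀ cc ∈ cube, cc ∉ Set.range c → norm2 (Bstar A q *ᵥ wVec Nr P N cc) < 1)) :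
    ∀ (Zr : Matrix (Fin K) (Dix Nr P N) ℂ) (Zc : Matrix (Fin K') (Dix Nr P N) ℂ),
      hasAtomicDecomp Nr P N K Zr → hasAtomicDecomp Nr P N K' Zc →
      (fun j => Bop G Zr j + Bop A Zc j) = y →
      atomicNorm Nr P N K Xr + atomicNorm Nr P N K' Xc
        ≤ atomicNorm Nr P N K Zr + atomicNorm Nr P N K' Zc := by
  obtain ⟨q, hq1, hq2, hq3, hq4⟩ := hcert
  intro Zr Zc hZr hZc hcons
  have hMrB : ∀ rr ∈ cube, norm2 (Bstar G q *ᵥ wVec Nr P N rr) ≤ 1 := by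
    intro rr hrr
    by_cases hmem : rr ∈ Set.range r
    · obtain ⟨ℓ, rfl⟩ := hmem
      rw [hq1 ℓ, norm2_smul, abs_csign (hα ℓ), hu, mul_one]
    · exact (hq3 rr hrr hmem).le
  have hMcB : ∀ cc ∈ cube, norm2 (Bstar A q *ᵥ wVec Nr P N cc) ≤ 1 := by
    intro cc hcc
    by_cases hmem : cc ∈ Set.range c
    · obtain ⟨qq, rfl⟩ := hmem
      rw [hq2 qq, norm2_smul, abs_csign (hα' qq), hv, mul_one]
    · exact (hq4 cc hcc hmem).le
  have hXrEq : (Matrix.trace (Xrᴴ * Bstar G q)).re = ∑ ℓ, ‖α ℓ‖ :=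
    re_trace_eq_sum_abs Nr P N K (Bstar G q) α r u hα hu hq1 Xr hXr
  have hXcEq : (Matrix.trace (Xcᴴ * Bstar A q)).re = ∑ qq, ‖α' qq‖ :=
    re_trace_eq_sum_abs Nr P N K' (Bstar A q) α' c v hα' hv hq2 Xc hXc
  have hXrLe : atomicNorm Nr P N K Xr ≤ ∑ ℓ, ‖α ℓ‖ :=
    atomicNorm_le_of_decomp Nr P N K α r u hr hu Xr hXr
  have hXcLe : atomicNorm Nr P N K' Xc ≤ ∑ qq, ‖α' qq‖ :=
    atomicNorm_le_of_decomp Nr P N K' α' c v hc hv Xc hXc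
  have hZrGe := re_trace_le_atomicNorm Nr P N K (Bstar G q) hMrB Zr hZr
  have hZcGe := re_trace_le_atomicNorm Nr P N K' (Bstar A q) hMcB Zc hZc
  have e1 : Matrix.trace (Xrᴴ * Bstar G q) + Matrix.trace (Xcᴴ * Bstar A q)
      = ∑ j, (starRingEnd ℂ) (y j) * q j := by
    rw [trace_conjT_mul_Bstar, trace_conjT_mul_Bstar, hy, ← Finset.sum_add_distrib]
    refine Finset.sum_congr rfl fun j _ => ?_
    simp only [map_add]
    ring
  have e2 : Matrix.trace (Zrᴴ * Bstar G q) + Matrix.trace (Zcᴴ * Bstar A q)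
      = ∑ j, (starRingEnd ℂ) (y j) * q j := by
    rw [trace_conjT_mul_Bstar, trace_conjT_mul_Bstar, ← hcons, ← Finset.sum_add_distrib]
    refine Finset.sum_congr rfl fun j _ => ?_
    simp only [map_add]
    ring
  have hmid : (Matrix.trace (Xrᴴ * Bstar G q)).re + (Matrix.trace (Xcᴴ * Bstar A q)).re
      = (Matrix.trace (Zrᴴ * Bstar G q)).re + (Matrix.trace (Zcᴴ * Bstar A q)).re := by
    have h := congrArg Complex.re (e1.trans e2.symm)
    simpa [Complex.add_re] using h
  calc atomicNorm Nr P N K Xr + atomicNorm Nr P N K' Xc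
      ≤ (∑ ℓ, ‖α ℓ‖) + ∑ qq, ‖α' qq‖ := add_le_add hXrLe hXcLe
    _ = (Matrix.trace (Xrᴴ * Bstar G q)).re + (Matrix.trace (Xcᴴ * Bstar A q)).re := by
        rw [hXrEq, hXcEq]
    _ = (Matrix.trace (Zrᴴ * Bstar G q)).re + (Matrix.trace (Zcᴴ * Bstar A q)).re := hmid
    _ ≤ atomicNorm Nr P N K Zr + atomicNorm Nr P N K' Zc := add_le_add hZrGe hZcGe
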